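/- For each α > 0 and each t ≥ 0, the composition operator C_{φ_t} with φ_t(z) = e^{-t}z + 1 - e^{-t} maps the Beurling subspace u_α H² into itself, where u_α(z) = exp(α(z+1)/(z-1)). -/

import Mathlib

open Complex Metric

noncomputable def meanSq (f : ℂ → ℂ) (r : ℝ) : ℝ :=
  (2 * Real.pi)⁻¹ * ∫ θ in (0:ℝ)..(2 * Real.pi), ‖f ((r : ℂ) * Complex.exp (θ * Complex.I))‖ ^ 2

def MemH2 (f : ℂ → ℂ) : Prop :=
  DifferentiableOn ℂ f (ball 0 1) ∧ BddAbove (meanSq f '' Set.Ioo 0 1)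

noncomputable def phiFlow (t : ℝ) (z : ℂ) : ℂ :=
  (Real.exp (-t) : ℂ) * z + 1 - (Real.exp (-t) : ℂ)

/-- The atomic singular inner function `u_α(z) = exp(α (z+1)/(z-1))`. -/
noncomputable def uAtomic (α : ℝ) (z : ℂ) : ℂ :=
  Complex.exp ((α : ℂ) * (z + 1) / (z - 1))

open Complex Metric MeasureTheory intervalIntegral Set

noncomputable def pker (z w : ℂ) : ℝ :=
  (Complex.normSq w - Complex.normSq z) / Complex.normSq (w - z)

lemma pker_nonneg {z w : ℂ} (h : ‖z‖ ≤ ‖w‖) : 0 ≤ pker z w := by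
  apply div_nonneg _ (Complex.normSq_nonneg _)
  have : Complex.normSq z ≤ Complex.normSq w := by
    rw [Complex.normSq_eq_norm_sq, Complex.normSq_eq_norm_sq]
    exact pow_le_pow_left₀ (norm_nonneg z) h 2
  linarith

lemma pker_re {z w : ℂ} (h : z ≠ w) : pker z w = ((w + z) / (w - z)).re := by
  have hd : Complex.normSq (w - z) ≠ 0 := by
    rw [ne_eq, Complex.normSq_eq_zero, sub_eq_zero]
    exact fun hh => h hh.symm
  rw [Complex.div_re]
  unfold pker
  simp only [Complex.normSq_apply, Complex.add_re, Complex.add_im, Complex.sub_re,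
    Complex.sub_im] at *
  field_simp
  ring

lemma pker_cast {z w : ℂ} (h : z ≠ w) :
    (pker z w : ℂ) = ((Complex.normSq w : ℂ) - Complex.normSq z) / Complex.normSq (w - z) := by
  have hd : Complex.normSq (w - z) ≠ 0 := by
    rw [ne_eq, Complex.normSq_eq_zero, sub_eq_zero]; exact fun hh => h hh.symm
  unfold pker
  push_cast
  rfl

lemma key_kernel {R : ℝ} (hR : 0 < R) {z : ℂ} (hz : ‖z‖ < R) (θ : ℝ) :
    circleMap 0 R θ * I *
      ((circleMap 0 R θ - z)⁻¹ +
        (starRingEnd ℂ) z * (((R ^ 2 : ℝ) : ℂ) - (starRingEnd ℂ) z * circleMap 0 R θ)⁻¹) =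
    I * (pker z (circleMap 0 R θ) : ℂ) := by
  set w := circleMap 0 R θ with hw
  have hwnorm : ‖w‖ = R := by
    simp [hw, circleMap, abs_of_pos hR, Complex.norm_exp]
  have hwz : z ≠ w := by intro hh; rw [hh, hwnorm] at hz; exact lt_irrefl _ hz
  have hwz' : w - z ≠ 0 := sub_ne_zero.mpr (fun hh => hwz hh.symm)
  have hcwz : (starRingEnd ℂ) (w - z) ≠ 0 := by
    exact star_ne_zero.mpr hwz'
  have hw0 : w ≠ 0 := by
    intro hh; rw [hh] at hwnorm; simp at hwnorm; exact hR.ne' hwnorm.symm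
  have hR2 : ((R ^ 2 : ℝ) : ℂ) = w * (starRingEnd ℂ) w := by
    rw [Complex.mul_conj]
    norm_cast
    rw [← hwnorm, Complex.normSq_eq_norm_sq]
  have hfac : ((R ^ 2 : ℝ) : ℂ) - (starRingEnd ℂ) z * w = w * (starRingEnd ℂ) (w - z) := by
    rw [hR2, map_sub]; ring
  rw [pker_cast hwz, hfac]
  have h1 : (Complex.normSq (w - z) : ℂ) = (w - z) * (starRingEnd ℂ) (w - z) :=
    (Complex.mul_conj _).symm
  have h2 : (Complex.normSq w : ℂ) = w * (starRingEnd ℂ) w := (Complex.mul_conj _).symm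
  have h3 : (Complex.normSq z : ℂ) = z * (starRingEnd ℂ) z := (Complex.mul_conj _).symm
  rw [h1, h2, h3, map_sub]
  have hden : w * ((starRingEnd ℂ) w - (starRingEnd ℂ) z) ≠ 0 := by
    rw [← map_sub]; exact mul_ne_zero hw0 hcwz
  rw [map_sub] at hcwz
  field_simp
  ring

lemma mean_value {H : ℂ → ℂ} {r : ℝ} (hr : 0 < r)
    (hH : DifferentiableOn ℂ H (closedBall 0 r)) :
    ∫ θ in (0:ℝ)..(2 * Real.pi), H (circleMap 0 r θ) = (2 * Real.pi) * H 0 := by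
  have hcl : closure (ball (0:ℂ) r) = closedBall 0 r := closure_ball 0 hr.ne'
  have hdc : DiffContOnCl ℂ H (ball 0 r) := DifferentiableOn.diffContOnCl (by rwa [hcl])
  have h0 : (0:ℂ) ∈ ball (0:ℂ) r := by simpa using hr
  have hC := hdc.circleIntegral_sub_inv_smul h0
  simp only [circleIntegral, deriv_circleMap, smul_eq_mul, sub_zero] at hC
  have hcong : ∀ θ : ℝ, circleMap 0 r θ * I * ((circleMap 0 r θ)⁻¹ * H (circleMap 0 r θ))
      = I * H (circleMap 0 r θ) := by
    intro θ
    have hw0 : circleMap 0 r θ ≠ 0 := by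
      simp [circleMap, Complex.exp_ne_zero, hr.ne']
    field_simp
  rw [intervalIntegral.integral_congr (fun θ _ => hcong θ)] at hC
  rw [intervalIntegral.integral_const_mul] at hC
  have hI : (I : ℂ) ≠ 0 := Complex.I_ne_zero
  apply mul_left_cancel₀ hI
  rw [hC]; ring

lemma poisson_rep {g : ℂ → ℂ} {R : ℝ} (hR : 0 < R)
    (hg : DifferentiableOn ℂ g (closedBall 0 R)) {z : ℂ} (hz : ‖z‖ < R) :
    ∫ θ in (0:ℝ)..(2 * Real.pi), (pker z (circleMap 0 R θ) : ℂ) * g (circleMap 0 R θ)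
      = (2 * Real.pi) * g z := by
  have hcl : closure (ball (0:ℂ) R) = closedBall 0 R := closure_ball 0 hR.ne'
  have hdc : DiffContOnCl ℂ g (ball 0 R) := DifferentiableOn.diffContOnCl (by rwa [hcl])
  have hzb : z ∈ ball (0:ℂ) R := by simpa [mem_ball_zero_iff] using hz
  -- Cauchy integral formula
  have hA := hdc.circleIntegral_sub_inv_smul hzb
  -- auxiliary function with pole outside the disk
  set q : ℂ → ℂ := fun w =>
    g w * ((starRingEnd ℂ) z * (((R ^ 2 : ℝ) : ℂ) - (starRingEnd ℂ) z * w)⁻¹) with hq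
  have hden : ∀ w : ℂ, ‖w‖ ≤ R → (((R ^ 2 : ℝ) : ℂ) - (starRingEnd ℂ) z * w) ≠ 0 := by
    intro w hw hcontra
    have h1 : ‖(starRingEnd ℂ) z * w‖ < R ^ 2 := by
      rw [norm_mul]
      have : ‖(starRingEnd ℂ) z‖ = ‖z‖ := by simp
      rw [this]
      calc ‖z‖ * ‖w‖ ≤ ‖z‖ * R := by
            exact mul_le_mul_of_nonneg_left hw (norm_nonneg _)
        _ < R * R := by exact mul_lt_mul_of_pos_right hz hR
        _ = R ^ 2 := (sq R).symm
    rw [sub_eq_zero] at hcontra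
    rw [← hcontra] at h1
    simp [abs_of_pos hR] at h1
  have hqd : DifferentiableOn ℂ q (closedBall 0 R) := by
    apply hg.mul
    apply DifferentiableOn.mul (differentiableOn_const _)
    apply DifferentiableOn.inv
    · exact (differentiableOn_const _).sub ((differentiableOn_const _).mul differentiableOn_id)
    · intro w hw
      exact hden w (by simpa [mem_closedBall_zero_iff] using hw)
  -- ∮ q = 0 via Cauchy formula applied to w * q w at center 0
  have hQ : (∮ w in C(0, R), q w) = 0 := by
    have hdq : DiffContOnCl ℂ (fun w => w * q w) (ball 0 R) :=
      DifferentiableOn.diffContOnCl (by rw [hcl]; exact differentiableOn_id.mul hqd)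
    have h0 : (0:ℂ) ∈ ball (0:ℂ) R := by simpa using hR
    have h2 := hdq.circleIntegral_sub_inv_smul h0
    simp only [smul_eq_mul, zero_mul, mul_zero, sub_zero] at h2
    refine Eq.trans ?_ h2
    apply circleIntegral.integral_congr hR.le
    intro w hw
    have hw0 : w ≠ 0 := by
      intro hh
      rw [mem_sphere_zero_iff_norm] at hw
      rw [hh] at hw; simp at hw; exact hR.ne' hw.symm
    simp only [smul_eq_mul]
    field_simp
  have hInt1 : CircleIntegrable (fun w => (w - z)⁻¹ • g w) 0 R := by
    apply ContinuousOn.circleIntegrable hR.le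
    apply ContinuousOn.fun_smul
    · apply ContinuousOn.inv₀
      · exact (continuousOn_id.sub continuousOn_const)
      · intro w hw
        rw [mem_sphere_zero_iff_norm] at hw
        rw [sub_ne_zero]
        intro hh; rw [hh] at hw; exact (ne_of_lt hz) hw
    · exact (hg.continuousOn).mono (sphere_subset_closedBall)
  have hInt2 : CircleIntegrable q 0 R :=
    ContinuousOn.circleIntegrable hR.le
      ((hqd.continuousOn).mono (sphere_subset_closedBall))
  simp only [circleIntegral] at hA hQ
  have hsum : (∫ θ in (0:ℝ)..(2 * Real.pi),
      (deriv (circleMap 0 R) θ • ((circleMap 0 R θ - z)⁻¹ • g (circleMap 0 R θ))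
        + deriv (circleMap 0 R) θ • q (circleMap 0 R θ)))
      = (2 * Real.pi * I) • g z := by
    rw [intervalIntegral.integral_add hInt1.out hInt2.out, hA, hQ, add_zero]
  simp only [deriv_circleMap, smul_eq_mul] at hsum
  have hcong : ∀ θ ∈ Set.uIcc (0:ℝ) (2 * Real.pi),
      circleMap 0 R θ * I * ((circleMap 0 R θ - z)⁻¹ * g (circleMap 0 R θ))
        + circleMap 0 R θ * I * q (circleMap 0 R θ)
      = I * ((pker z (circleMap 0 R θ) : ℂ) * g (circleMap 0 R θ)) := by
    intro θ _
    have hkk := key_kernel hR hz θ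
    calc circleMap 0 R θ * I * ((circleMap 0 R θ - z)⁻¹ * g (circleMap 0 R θ))
          + circleMap 0 R θ * I * q (circleMap 0 R θ)
        = circleMap 0 R θ * I * ((circleMap 0 R θ - z)⁻¹ +
            (starRingEnd ℂ) z * (((R ^ 2 : ℝ) : ℂ)
              - (starRingEnd ℂ) z * circleMap 0 R θ)⁻¹) * g (circleMap 0 R θ) := by
          rw [hq]; ring
      _ = I * (pker z (circleMap 0 R θ) : ℂ) * g (circleMap 0 R θ) := by rw [hkk]
      _ = I * ((pker z (circleMap 0 R θ) : ℂ) * g (circleMap 0 R θ)) := by ring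
  rw [intervalIntegral.integral_congr hcong, intervalIntegral.integral_const_mul] at hsum
  apply mul_left_cancel₀ Complex.I_ne_zero
  rw [hsum]; ring

lemma poisson_ineq {g : ℂ → ℂ} {R : ℝ} (hR : 0 < R)
    (hg : DifferentiableOn ℂ g (closedBall 0 R)) {z : ℂ} (hz : ‖z‖ < R) :
    (2 * Real.pi) * ‖g z‖ ^ 2
      ≤ ∫ θ in (0:ℝ)..(2 * Real.pi),
          pker z (circleMap 0 R θ) * ‖g (circleMap 0 R θ)‖ ^ 2 := by
  have hg2 : DifferentiableOn ℂ (fun w => g w * g w) (closedBall 0 R) := hg.mul hg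
  have hrep := poisson_rep hR hg2 hz
  have hnormR : ∀ θ : ℝ, ‖circleMap 0 R θ‖ = R := fun θ => by
    simp [circleMap, abs_of_pos hR, Complex.norm_exp]
  have h1 : (2 * Real.pi) * ‖g z‖ ^ 2 = ‖(2 * Real.pi : ℂ) * (g z * g z)‖ := by
    have e1 : ‖(2 * Real.pi : ℂ) * (g z * g z)‖ = ‖(2 * Real.pi : ℂ)‖ * ‖g z * g z‖ :=
      norm_mul _ _
    have e2 : ‖(2 * Real.pi : ℂ)‖ = 2 * Real.pi := by
      rw [show (2 * Real.pi : ℂ) = ((2 * Real.pi : ℝ) : ℂ) by push_cast; ring,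
        Complex.norm_real]
      rw [Real.norm_eq_abs, _root_.abs_of_nonneg (by positivity)]
    rw [e1, e2, norm_mul]; ring
  have h2 : ((2 * Real.pi : ℝ) : ℂ) * (g z * g z)
      = ∫ θ in (0:ℝ)..(2 * Real.pi),
          (pker z (circleMap 0 R θ) : ℂ) * (g (circleMap 0 R θ) * g (circleMap 0 R θ)) := by
    rw [hrep]; push_cast; ring
  calc (2 * Real.pi) * ‖g z‖ ^ 2 = ‖(2 * Real.pi : ℂ) * (g z * g z)‖ := h1
    _ = ‖∫ θ in (0:ℝ)..(2 * Real.pi),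
          (pker z (circleMap 0 R θ) : ℂ) * (g (circleMap 0 R θ) * g (circleMap 0 R θ))‖ := by
        rw [← h2]; norm_cast
    _ ≤ ∫ θ in (0:ℝ)..(2 * Real.pi),
          ‖(pker z (circleMap 0 R θ) : ℂ) * (g (circleMap 0 R θ) * g (circleMap 0 R θ))‖ := by
        apply intervalIntegral.norm_integral_le_integral_norm
        positivity
    _ = ∫ θ in (0:ℝ)..(2 * Real.pi),
          pker z (circleMap 0 R θ) * ‖g (circleMap 0 R θ)‖ ^ 2 := by
        apply intervalIntegral.integral_congr
        intro θ _
        have hp : 0 ≤ pker z (circleMap 0 R θ) := pker_nonneg (by rw [hnormR θ]; exact hz.le)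
        show ‖(pker z (circleMap 0 R θ) : ℂ) * (g (circleMap 0 R θ) * g (circleMap 0 R θ))‖
            = pker z (circleMap 0 R θ) * ‖g (circleMap 0 R θ)‖ ^ 2
        rw [norm_mul, norm_mul, Complex.norm_real, Real.norm_eq_abs,
          _root_.abs_of_nonneg hp, sq]

lemma comp_bound {g : ℂ → ℂ} (hg : DifferentiableOn ℂ g (ball 0 1)) {M : ℝ}
    (hM : ∀ ρ : ℝ, 0 < ρ → ρ < 1 →
      (∫ θ in (0:ℝ)..(2 * Real.pi), ‖g (circleMap 0 ρ θ)‖ ^ 2) ≤ (2 * Real.pi) * M)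
    {s r : ℝ} (hs0 : 0 < s) (hs1 : s ≤ 1) (hr0 : 0 < r) (hr1 : r < 1) :
    (∫ θ in (0:ℝ)..(2 * Real.pi), ‖g ((s:ℂ) * circleMap 0 r θ + 1 - s)‖ ^ 2)
      ≤ (2 * Real.pi) * ((4 / s) * M) := by
  have hpi : (0:ℝ) < 2 * Real.pi := by positivity
  have h1r : (0:ℝ) < 1 - r := by linarith
  set ρ : ℝ := 1 - s * (1 - r) / 2 with hρdef
  have hsr : 0 < s * (1 - r) / 2 := by positivity
  have hρ1 : ρ < 1 := by simp only [hρdef]; linarith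
  have hρ0 : 0 < ρ := by
    have h2 : s * (1 - r) ≤ 1 - r := by nlinarith
    simp only [hρdef]; nlinarith
  set b : ℝ := s * r + (1 - s) with hbdef
  have hbρ : b < ρ := by simp only [hbdef, hρdef]; nlinarith
  have hb0 : 0 ≤ b := by simp only [hbdef]; nlinarith
  have hgρ : DifferentiableOn ℂ g (closedBall 0 ρ) :=
    hg.mono (fun x hx => mem_ball_zero_iff.mpr
      (lt_of_le_of_lt (mem_closedBall_zero_iff.mp hx) hρ1))
  have hnormcm : ∀ (R : ℝ), 0 < R → ∀ θ : ℝ, ‖circleMap 0 R θ‖ = R := fun R hR θ => by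
    simp [circleMap, abs_of_pos hR, Complex.norm_exp]
  -- bound on the affine image
  have hφle : ∀ z : ℂ, ‖z‖ ≤ r → ‖(s:ℂ) * z + 1 - s‖ ≤ b := by
    intro z hz
    have e : (s:ℂ) * z + 1 - s = (s:ℂ) * z + ((1 - s : ℝ) : ℂ) := by push_cast; ring
    rw [e]
    refine le_trans (norm_add_le _ _) ?_
    rw [norm_mul, Complex.norm_real, Complex.norm_real, Real.norm_eq_abs, Real.norm_eq_abs,
      _root_.abs_of_pos hs0, _root_.abs_of_nonneg (by linarith : (0:ℝ) ≤ 1 - s)]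
    simp only [hbdef]
    have := mul_le_mul_of_nonneg_left hz hs0.le
    linarith
  have hφmem : ∀ θ : ℝ, ‖(s:ℂ) * circleMap 0 r θ + 1 - s‖ ≤ b := fun θ =>
    hφle _ (le_of_eq (hnormcm r hr0 θ))
  have hφρ : ∀ θ : ℝ, ‖(s:ℂ) * circleMap 0 r θ + 1 - s‖ < ρ := fun θ =>
    lt_of_le_of_lt (hφmem θ) hbρ
  have hne : ∀ θ w : ℝ, (s:ℂ) * circleMap 0 r θ + 1 - s ≠ circleMap 0 ρ w := by
    intro θ w hh
    have := hφρ θ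
    rw [hh, hnormcm ρ hρ0 w] at this
    exact lt_irrefl _ this
  -- measure
  set μ : Measure ℝ := MeasureTheory.volume.restrict (Set.Ioc (0:ℝ) (2 * Real.pi)) with hμdef
  set c : ℝ → ℝ := fun w => ‖g (circleMap 0 ρ w)‖ ^ 2 with hcdef
  have hgcm : Continuous (fun w : ℝ => g (circleMap 0 ρ w)) := by
    apply ContinuousOn.comp_continuous hgρ.continuousOn (continuous_circleMap 0 ρ)
    intro w
    rw [mem_closedBall_zero_iff, hnormcm ρ hρ0 w]
  have hc_cont : Continuous c := (hgcm.norm).pow 2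
  have hc_nonneg : ∀ w, 0 ≤ c w := fun w => by positivity
  set F : ℝ → ℝ → ℝ := fun θ w =>
    pker ((s:ℂ) * circleMap 0 r θ + 1 - s) (circleMap 0 ρ w) * c w with hFdef
  have hφθc : Continuous (fun θ : ℝ => (s:ℂ) * circleMap 0 r θ + 1 - s) := by
    have := continuous_circleMap (0:ℂ) r
    fun_prop
  have hFcont : Continuous (Function.uncurry F) := by
    apply Continuous.mul
    · unfold pker
      apply Continuous.div
      · apply Continuous.sub
        · exact Complex.continuous_normSq.comp ((continuous_circleMap 0 ρ).comp continuous_snd)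
        · exact Complex.continuous_normSq.comp (hφθc.comp continuous_fst)
      · exact Complex.continuous_normSq.comp
          (((continuous_circleMap 0 ρ).comp continuous_snd).sub (hφθc.comp continuous_fst))
      · intro p
        rw [ne_eq, Complex.normSq_eq_zero, sub_eq_zero]
        exact fun hh => hne p.1 p.2 hh.symm
    · exact hc_cont.comp continuous_snd
  have hFint : Integrable (Function.uncurry F) (μ.prod μ) := by
    rw [hμdef, Measure.prod_restrict]
    exact (hFcont.integrableOn_Icc (a := ((0:ℝ),(0:ℝ))) (b := (2*Real.pi, 2*Real.pi))).mono_set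
      (by
        rintro ⟨x, y⟩ ⟨hx, hy⟩
        exact ⟨⟨hx.1.le, hy.1.le⟩, ⟨hx.2, hy.2⟩⟩)
  -- pointwise Poisson bound
  have hpt : ∀ θ : ℝ, ‖g ((s:ℂ) * circleMap 0 r θ + 1 - s)‖ ^ 2
      ≤ (2 * Real.pi)⁻¹ * ∫ w, F θ w ∂μ := by
    intro θ
    have hPI := poisson_ineq hρ0 hgρ (hφρ θ)
    rw [intervalIntegral.integral_of_le hpi.le] at hPI
    calc ‖g ((s:ℂ) * circleMap 0 r θ + 1 - s)‖ ^ 2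
        = (2 * Real.pi)⁻¹ * ((2 * Real.pi) * ‖g ((s:ℂ) * circleMap 0 r θ + 1 - s)‖ ^ 2) := by
          field_simp
      _ ≤ (2 * Real.pi)⁻¹ * ∫ w, F θ w ∂μ :=
          mul_le_mul_of_nonneg_left hPI (by positivity)
  -- integrability in θ
  have hgφc : Continuous (fun θ : ℝ => ‖g ((s:ℂ) * circleMap 0 r θ + 1 - s)‖ ^ 2) := by
    have h1 : Continuous (fun θ : ℝ => g ((s:ℂ) * circleMap 0 r θ + 1 - s)) := by
      apply ContinuousOn.comp_continuous hgρ.continuousOn hφθc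
      intro θ
      rw [mem_closedBall_zero_iff]
      exact le_trans (hφmem θ) hbρ.le
    exact (h1.norm).pow 2
  have hI1 : Integrable (fun θ : ℝ => ‖g ((s:ℂ) * circleMap 0 r θ + 1 - s)‖ ^ 2) μ := by
    rw [hμdef]; exact hgφc.integrableOn_Ioc
  have hI2 : Integrable (fun θ : ℝ => (2 * Real.pi)⁻¹ * ∫ w, F θ w ∂μ) μ :=
    (hFint.integral_prod_left).const_mul _
  -- inner mean value identity
  have step4 : ∀ w : ℝ, (∫ θ, F θ w ∂μ)
      = (2 * Real.pi * pker ((1:ℂ) - s) (circleMap 0 ρ w)) * c w := by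
    intro w
    set ζ : ℂ := circleMap 0 ρ w with hζ
    have hζn : ‖ζ‖ = ρ := hnormcm ρ hρ0 w
    set H : ℂ → ℂ := fun z => (ζ + ((s:ℂ) * z + 1 - s)) / (ζ - ((s:ℂ) * z + 1 - s)) with hHdef
    have hdenne : ∀ z : ℂ, ‖z‖ ≤ r → ζ - ((s:ℂ) * z + 1 - s) ≠ 0 := by
      intro z hz
      rw [sub_ne_zero]
      intro hh
      have h1 := hφle z hz
      rw [← hh, hζn] at h1
      exact absurd h1 (not_le.mpr hbρ)
    have hH : DifferentiableOn ℂ H (closedBall 0 r) := by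
      apply DifferentiableOn.div
      · fun_prop
      · fun_prop
      · exact fun z hz => hdenne z (mem_closedBall_zero_iff.mp hz)
    have hmv := mean_value hr0 hH
    rw [intervalIntegral.integral_of_le hpi.le] at hmv
    have hHc : Continuous (fun θ : ℝ => H (circleMap 0 r θ)) := by
      rw [hHdef]
      apply Continuous.div
      · fun_prop
      · fun_prop
      · exact fun θ => hdenne _ (le_of_eq (hnormcm r hr0 θ))
    have hHint : Integrable (fun θ : ℝ => H (circleMap 0 r θ)) μ := by
      rw [hμdef]; exact hHc.integrableOn_Ioc
    have hre := _root_.integral_re hHint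
    simp only [RCLike.re_to_complex] at hre
    have hqeq : ∀ θ : ℝ, pker ((s:ℂ) * circleMap 0 r θ + 1 - s) ζ = (H (circleMap 0 r θ)).re :=
      fun θ => pker_re (hne θ w)
    have hinner : (∫ θ, pker ((s:ℂ) * circleMap 0 r θ + 1 - s) ζ ∂μ)
        = 2 * Real.pi * pker ((1:ℂ) - s) ζ := by
      rw [show (fun θ : ℝ => pker ((s:ℂ) * circleMap 0 r θ + 1 - s) ζ)
          = (fun θ : ℝ => (H (circleMap 0 r θ)).re) from funext hqeq]
      rw [hre, hmv]
      have hφ0 : (s:ℂ) * 0 + 1 - s = (1:ℂ) - s := by ring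
      have h0ne : (1:ℂ) - s ≠ ζ := by
        intro hh
        have h1 : ‖(1:ℂ) - (s:ℂ)‖ = 1 - s := by
          rw [show (1:ℂ) - (s:ℂ) = ((1 - s : ℝ) : ℂ) by push_cast; ring, Complex.norm_real,
            Real.norm_eq_abs, _root_.abs_of_nonneg (by linarith : (0:ℝ) ≤ 1 - s)]
        rw [hh, hζn] at h1
        have h2 : 1 - s ≤ b := by simp only [hbdef]; nlinarith
        linarith
      have : (H 0).re = pker ((1:ℂ) - s) ζ := by
        rw [hHdef]
        simp only [mul_zero, zero_add]
        rw [pker_re h0ne]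
      rw [show (2 * Real.pi * H 0 : ℂ) = ((2 * Real.pi : ℝ) : ℂ) * H 0 by push_cast; ring]
      rw [Complex.re_ofReal_mul, this]
    calc (∫ θ, F θ w ∂μ)
        = (∫ θ, pker ((s:ℂ) * circleMap 0 r θ + 1 - s) ζ ∂μ) * c w :=
          MeasureTheory.integral_mul_const _ _
      _ = (2 * Real.pi * pker ((1:ℂ) - s) ζ) * c w := by rw [hinner]
  -- uniform bound on the kernel at the center
  have h1s : ‖(1:ℂ) - (s:ℂ)‖ = 1 - s := by
    rw [show (1:ℂ) - (s:ℂ) = ((1 - s : ℝ) : ℂ) by push_cast; ring, Complex.norm_real,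
      Real.norm_eq_abs, _root_.abs_of_nonneg (by linarith : (0:ℝ) ≤ 1 - s)]
  have hd : ρ - (1 - s) = s * (1 + r) / 2 := by simp only [hρdef]; ring
  have hd0 : 0 < ρ - (1 - s) := by rw [hd]; positivity
  have hker : ∀ w : ℝ, pker ((1:ℂ) - s) (circleMap 0 ρ w) ≤ 4 / s := by
    intro w
    set ζ : ℂ := circleMap 0 ρ w with hζ
    have hζn : ‖ζ‖ = ρ := hnormcm ρ hρ0 w
    have hnζ : Complex.normSq ζ = ρ ^ 2 := by
      rw [← Complex.sq_norm, hζn]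
    have hn1 : Complex.normSq ((1:ℂ) - s) = (1 - s) ^ 2 := by
      rw [← Complex.sq_norm, h1s]
    have hnum : 0 ≤ ρ ^ 2 - (1 - s) ^ 2 := by nlinarith
    have hdenom : (ρ - (1 - s)) ^ 2 ≤ Complex.normSq (ζ - ((1:ℂ) - s)) := by
      rw [← Complex.sq_norm]
      have h1 : ρ - (1 - s) ≤ ‖ζ - ((1:ℂ) - s)‖ := by
        have := norm_sub_norm_le ζ ((1:ℂ) - s)
        rw [hζn, h1s] at this
        exact this
      exact pow_le_pow_left₀ hd0.le h1 2
    unfold pker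
    rw [hnζ, hn1]
    calc (ρ ^ 2 - (1 - s) ^ 2) / Complex.normSq (ζ - ((1:ℂ) - s))
        ≤ (ρ ^ 2 - (1 - s) ^ 2) / (ρ - (1 - s)) ^ 2 :=
          div_le_div_of_nonneg_left hnum (by positivity) hdenom
      _ ≤ 4 / s := by
          rw [div_le_div_iff₀ (by positivity) hs0]
          simp only [hρdef]
          nlinarith [mul_pos (mul_pos hs0 hs0) hr0,
            mul_pos (mul_pos (mul_pos hs0 hs0) hr0) hr0,
            mul_pos (mul_pos hs0 hs0) hs0,
            mul_nonneg (mul_nonneg (mul_nonneg (mul_nonneg hs0.le hs0.le) hs0.le) hr0.le) h1r.le]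
  -- continuity of the w-integrand
  have hpkerw : Continuous (fun w : ℝ => pker ((1:ℂ) - s) (circleMap 0 ρ w)) := by
    unfold pker
    apply Continuous.div
    · exact (Complex.continuous_normSq.comp (continuous_circleMap 0 ρ)).sub continuous_const
    · exact Complex.continuous_normSq.comp ((continuous_circleMap 0 ρ).sub continuous_const)
    · intro w
      rw [ne_eq, Complex.normSq_eq_zero, sub_eq_zero]
      intro hh
      have : ‖(1:ℂ) - (s:ℂ)‖ = ρ := by rw [← hh]; exact hnormcm ρ hρ0 w
      rw [h1s] at this
      have h2 : 1 - s ≤ b := by simp only [hbdef]; nlinarith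
      linarith
  -- assemble
  have hcInt : Integrable c μ := by rw [hμdef]; exact hc_cont.integrableOn_Ioc
  have hcint_bound : (∫ w, c w ∂μ) ≤ 2 * Real.pi * M := by
    have := hM ρ hρ0 hρ1
    rwa [intervalIntegral.integral_of_le hpi.le] at this
  rw [intervalIntegral.integral_of_le hpi.le]
  have main : (∫ θ, ‖g ((s:ℂ) * circleMap 0 r θ + 1 - s)‖ ^ 2 ∂μ)
      ≤ (2 * Real.pi)⁻¹ * ((2 * Real.pi * (4 / s)) * (2 * Real.pi * M)) := by
    calc (∫ θ, ‖g ((s:ℂ) * circleMap 0 r θ + 1 - s)‖ ^ 2 ∂μ)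
        ≤ ∫ θ, (2 * Real.pi)⁻¹ * ∫ w, F θ w ∂μ ∂μ :=
          MeasureTheory.integral_mono hI1 hI2 hpt
      _ = (2 * Real.pi)⁻¹ * ∫ θ, (∫ w, F θ w ∂μ) ∂μ :=
          MeasureTheory.integral_const_mul _ _
      _ = (2 * Real.pi)⁻¹ * ∫ w, (∫ θ, F θ w ∂μ) ∂μ := by
          rw [MeasureTheory.integral_integral_swap hFint]
      _ = (2 * Real.pi)⁻¹ * ∫ w, (2 * Real.pi * pker ((1:ℂ) - s) (circleMap 0 ρ w)) * c w ∂μ := by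
          rw [MeasureTheory.integral_congr_ae (Filter.Eventually.of_forall step4)]
      _ ≤ (2 * Real.pi)⁻¹ * ((2 * Real.pi * (4 / s)) * (2 * Real.pi * M)) := by
          apply mul_le_mul_of_nonneg_left _ (by positivity)
          calc (∫ w, (2 * Real.pi * pker ((1:ℂ) - s) (circleMap 0 ρ w)) * c w ∂μ)
              ≤ ∫ w, (2 * Real.pi * (4 / s)) * c w ∂μ := by
                apply MeasureTheory.integral_mono _ _ _
                · rw [hμdef]
                  exact ((continuous_const.mul hpkerw).mul hc_cont).integrableOn_Ioc
                · exact hcInt.const_mul _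
                · intro w
                  exact mul_le_mul_of_nonneg_right
                    (mul_le_mul_of_nonneg_left (hker w) (by positivity)) (hc_nonneg w)
            _ = (2 * Real.pi * (4 / s)) * ∫ w, c w ∂μ :=
                MeasureTheory.integral_const_mul _ _
            _ ≤ (2 * Real.pi * (4 / s)) * (2 * Real.pi * M) := by
                apply mul_le_mul_of_nonneg_left hcint_bound (by positivity)
  calc (∫ θ, ‖g ((s:ℂ) * circleMap 0 r θ + 1 - s)‖ ^ 2 ∂μ)
      ≤ (2 * Real.pi)⁻¹ * ((2 * Real.pi * (4 / s)) * (2 * Real.pi * M)) := main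
    _ = (2 * Real.pi) * ((4 / s) * M) := by
        field_simp

lemma meanSq_eq (f : ℂ → ℂ) (r : ℝ) :
    meanSq f r = (2 * Real.pi)⁻¹ * ∫ θ in (0:ℝ)..(2 * Real.pi), ‖f (circleMap 0 r θ)‖ ^ 2 := by
  simp [meanSq, circleMap]

/-- For `α > 0` and `t ≥ 0`, the composition operator `C_{φ_t}` maps the Beurling subspace
`u_α H²` into itself: for every `g ∈ H²` there is `h ∈ H²` with
`(u_α g) ∘ φ_t = u_α h` on `𝔻`. -/
theorem compOp_maps_beurling (α : ℝ) (hα : 0 < α) (t : ℝ) (ht : 0 ≤ t)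
    (g : ℂ → ℂ) (hg : MemH2 g) :
    ∃ h : ℂ → ℂ, MemH2 h ∧
      ∀ z ∈ ball (0 : ℂ) 1,
        uAtomic α (phiFlow t z) * g (phiFlow t z) = uAtomic α z * h z := by
  obtain ⟨hgd, hgb⟩ := hg
  have hpi : (0:ℝ) < 2 * Real.pi := by positivity
  set s : ℝ := Real.exp (-t) with hsdef
  have hs0 : 0 < s := Real.exp_pos _
  have hs1 : s ≤ 1 := Real.exp_le_one_iff.mpr (by linarith)
  have hsne : (s:ℂ) ≠ 0 := Complex.ofReal_ne_zero.mpr hs0.ne'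
  set β : ℝ := 2 * α * (1 - s) / s with hβdef
  have hβ0 : 0 ≤ β := div_nonneg (by nlinarith) hs0.le
  have hβcast : (β : ℂ) = 2 * (α:ℂ) * (1 - (s:ℂ)) / (s:ℂ) := by
    rw [hβdef]; push_cast; ring
  -- norm bound for the affine map
  have hφnorm : ∀ z : ℂ, ‖z‖ < 1 → ‖(s:ℂ) * z + 1 - s‖ < 1 := by
    intro z hz
    have e : (s:ℂ) * z + 1 - s = (s:ℂ) * z + ((1 - s : ℝ) : ℂ) := by push_cast; ring
    rw [e]
    calc ‖(s:ℂ) * z + ((1 - s : ℝ) : ℂ)‖ ≤ ‖(s:ℂ) * z‖ + ‖((1 - s : ℝ) : ℂ)‖ := norm_add_le _ _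
      _ = s * ‖z‖ + (1 - s) := by
          rw [norm_mul, Complex.norm_real, Complex.norm_real, Real.norm_eq_abs,
            Real.norm_eq_abs, _root_.abs_of_pos hs0,
            _root_.abs_of_nonneg (by linarith : (0:ℝ) ≤ 1 - s)]
      _ < 1 := by nlinarith
  -- the exponential factor has modulus at most 1 on the disk
  have hexp_le : ∀ z : ℂ, ‖z‖ < 1 → ‖Complex.exp ((β:ℂ) / (z - 1))‖ ≤ 1 := by
    intro z hz
    rw [Complex.norm_exp, Real.exp_le_one_iff]
    rw [div_eq_mul_inv, Complex.re_ofReal_mul, Complex.inv_re]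
    apply mul_nonpos_of_nonneg_of_nonpos hβ0
    apply div_nonpos_of_nonpos_of_nonneg _ (Complex.normSq_nonneg _)
    rw [Complex.sub_re, Complex.one_re]
    have : z.re ≤ ‖z‖ := by
      exact Complex.re_le_norm z
    linarith
  have hz1ne : ∀ z : ℂ, ‖z‖ < 1 → z - 1 ≠ 0 := by
    intro z hz hh
    rw [sub_eq_zero] at hh
    rw [hh] at hz
    simp at hz
  refine ⟨fun z => Complex.exp ((β:ℂ) / (z - 1)) * g ((s:ℂ) * z + 1 - s), ⟨?_, ?_⟩, ?_⟩
  · -- differentiability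
    apply DifferentiableOn.mul
    · apply DifferentiableOn.cexp
      apply DifferentiableOn.div (differentiableOn_const _)
        (differentiableOn_id.sub (differentiableOn_const _))
      exact fun z hz => hz1ne z (mem_ball_zero_iff.mp hz)
    · apply hgd.comp (by fun_prop)
      intro z hz
      exact mem_ball_zero_iff.mpr (hφnorm z (mem_ball_zero_iff.mp hz))
  · -- bounded mean squares
    obtain ⟨M, hM⟩ := hgb
    have hMρ : ∀ ρ : ℝ, 0 < ρ → ρ < 1 →
        (∫ θ in (0:ℝ)..(2 * Real.pi), ‖g (circleMap 0 ρ θ)‖ ^ 2) ≤ (2 * Real.pi) * M := by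
      intro ρ h0 h1
      have h2 : meanSq g ρ ≤ M := hM ⟨ρ, ⟨h0, h1⟩, rfl⟩
      rw [meanSq_eq] at h2
      calc (∫ θ in (0:ℝ)..(2 * Real.pi), ‖g (circleMap 0 ρ θ)‖ ^ 2)
          = (2 * Real.pi) * ((2 * Real.pi)⁻¹
              * ∫ θ in (0:ℝ)..(2 * Real.pi), ‖g (circleMap 0 ρ θ)‖ ^ 2) := by field_simp
        _ ≤ (2 * Real.pi) * M := mul_le_mul_of_nonneg_left h2 hpi.le
    refine ⟨(4 / s) * M, ?_⟩
    rintro x ⟨r, ⟨hr0, hr1⟩, rfl⟩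
    rw [meanSq_eq]
    have hcm : ∀ θ : ℝ, ‖circleMap 0 r θ‖ < 1 := fun θ => by
      rw [show ‖circleMap 0 r θ‖ = |r| by simp [circleMap, Complex.norm_exp]]
      rw [_root_.abs_of_pos hr0]; exact hr1
    -- continuity of both integrands
    have hgφc : Continuous (fun θ : ℝ => g ((s:ℂ) * circleMap 0 r θ + 1 - s)) := by
      apply ContinuousOn.comp_continuous hgd.continuousOn
      · have := continuous_circleMap (0:ℂ) r
        fun_prop
      · exact fun θ => mem_ball_zero_iff.mpr (hφnorm _ (hcm θ))
    have hec : Continuous (fun θ : ℝ =>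
        Complex.exp ((β:ℂ) / (circleMap 0 r θ - 1))) := by
      apply Continuous.cexp
      apply Continuous.div continuous_const ((continuous_circleMap 0 r).sub continuous_const)
      exact fun θ => hz1ne _ (hcm θ)
    have hmono : (∫ θ in (0:ℝ)..(2 * Real.pi),
          ‖Complex.exp ((β:ℂ) / (circleMap 0 r θ - 1))
            * g ((s:ℂ) * circleMap 0 r θ + 1 - s)‖ ^ 2)
        ≤ ∫ θ in (0:ℝ)..(2 * Real.pi), ‖g ((s:ℂ) * circleMap 0 r θ + 1 - s)‖ ^ 2 := by
      apply intervalIntegral.integral_mono_on hpi.le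
      · exact ((hec.mul hgφc).norm.pow 2).intervalIntegrable _ _
      · exact (hgφc.norm.pow 2).intervalIntegrable _ _
      · intro θ _
        have h1 : ‖Complex.exp ((β:ℂ) / (circleMap 0 r θ - 1))
            * g ((s:ℂ) * circleMap 0 r θ + 1 - s)‖
            ≤ ‖g ((s:ℂ) * circleMap 0 r θ + 1 - s)‖ := by
          rw [norm_mul]
          calc ‖Complex.exp ((β:ℂ) / (circleMap 0 r θ - 1))‖
                * ‖g ((s:ℂ) * circleMap 0 r θ + 1 - s)‖
              ≤ 1 * ‖g ((s:ℂ) * circleMap 0 r θ + 1 - s)‖ :=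
                mul_le_mul_of_nonneg_right (hexp_le _ (hcm θ)) (norm_nonneg _)
            _ = _ := one_mul _
        exact pow_le_pow_left₀ (norm_nonneg _) h1 2
    have hcb := comp_bound hgd hMρ hs0 hs1 hr0 hr1
    calc (2 * Real.pi)⁻¹ * ∫ θ in (0:ℝ)..(2 * Real.pi),
          ‖Complex.exp ((β:ℂ) / (circleMap 0 r θ - 1))
            * g ((s:ℂ) * circleMap 0 r θ + 1 - s)‖ ^ 2
        ≤ (2 * Real.pi)⁻¹ * ((2 * Real.pi) * ((4 / s) * M)) := by
          apply mul_le_mul_of_nonneg_left (le_trans hmono hcb) (by positivity)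
      _ = (4 / s) * M := by field_simp
  · -- the intertwining identity
    intro z hz
    have hzn : ‖z‖ < 1 := mem_ball_zero_iff.mp hz
    have hz1 : z - 1 ≠ 0 := hz1ne z hzn
    have hφeq : phiFlow t z = (s:ℂ) * z + 1 - s := rfl
    have key : (α:ℂ) * (((s:ℂ) * z + 1 - s) + 1) / (((s:ℂ) * z + 1 - s) - 1)
        = (α:ℂ) * (z + 1) / (z - 1) + (β:ℂ) / (z - 1) := by
      have e : ((s:ℂ) * z + 1 - s) - 1 = (s:ℂ) * (z - 1) := by ring
      rw [e, hβcast]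
      field_simp
      ring
    have huA : uAtomic α (phiFlow t z) = uAtomic α z * Complex.exp ((β:ℂ) / (z - 1)) := by
      rw [hφeq]
      unfold uAtomic
      rw [key, Complex.exp_add]
    rw [huA, hφeq]
    ring
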